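/- arXiv:1511.04690 — 2 statements merged into one kernel-verified Lean document; each statement's English description precedes it below -/
import Mathlib

section
/- Let Γ̂ ∈ ℝ^{p×p} be symmetric, γ̂ ∈ ℝ^p, β* ∈ ℝ^p, and k, c > 0. Suppose Δ ∈ ℝ^p satisfies: (i) ‖Δ‖₁ ≤ 2√k‖Δ‖₂; (ii) (1/2)ΔᵀΓ̂Δ ≤ ⟨γ̂ - Γ̂β*, Δ⟩; and (iii) ΔᵀΓ̂Δ ≥ 2c‖Δ‖₂². Then ‖Δ‖₂ ≤ (2√k/c)·‖γ̂ - Γ̂β*‖_∞ and ‖Δ‖₁ ≤ (4k/c)·‖γ̂ - Γ̂β*‖_∞. -/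
open Matrix

/-- Statistical error bound skeleton: under the cone condition, the basic
inequality, and the restricted curvature condition, the `ℓ²` and `ℓ¹` errors
are controlled by `‖γ̂ - Γ̂β*‖_∞` (the sup norm on `Fin p → ℝ`). -/
theorem error_bound_from_cone_basic_curvature
    (p : ℕ) (Γ : Matrix (Fin p) (Fin p) ℝ) (hΓ : Γ.IsSymm)
    (γ βstar Δ : Fin p → ℝ) (k c : ℝ) (hk : 0 < k) (hc : 0 < c)
    (hcone : ∑ i, |Δ i| ≤ 2 * Real.sqrt k * Real.sqrt (∑ i, (Δ i) ^ 2))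
    (hbasic : (1 / 2) * (Δ ⬝ᵥ Γ.mulVec Δ) ≤ (γ - Γ.mulVec βstar) ⬝ᵥ Δ)
    (hcurv : 2 * c * (∑ i, (Δ i) ^ 2) ≤ Δ ⬝ᵥ Γ.mulVec Δ) :
    Real.sqrt (∑ i, (Δ i) ^ 2) ≤ (2 * Real.sqrt k / c) * ‖γ - Γ.mulVec βstar‖ ∧
    ∑ i, |Δ i| ≤ (4 * k / c) * ‖γ - Γ.mulVec βstar‖ := by
  set v := γ - Γ.mulVec βstar with hv
  set S := ∑ i, (Δ i) ^ 2 with hS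
  have hS0 : 0 ≤ S := Finset.sum_nonneg fun i _ => sq_nonneg _
  set s := Real.sqrt S with hs
  have hs0 : 0 ≤ s := Real.sqrt_nonneg _
  have hM0 : 0 ≤ ‖v‖ := norm_nonneg _
  have hsq : s ^ 2 = S := Real.sq_sqrt hS0
  have hk0 : 0 ≤ Real.sqrt k := Real.sqrt_nonneg _
  -- Hölder
  have hholder : v ⬝ᵥ Δ ≤ ‖v‖ * ∑ i, |Δ i| := by
    rw [dotProduct, Finset.mul_sum]
    refine Finset.sum_le_sum fun i _ => ?_
    calc v i * Δ i ≤ |v i * Δ i| := le_abs_self _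
      _ = |v i| * |Δ i| := abs_mul _ _
      _ ≤ ‖v‖ * |Δ i| := by
          exact mul_le_mul_of_nonneg_right (norm_le_pi_norm v i) (abs_nonneg _)
  have key : c * s ^ 2 ≤ 2 * Real.sqrt k * ‖v‖ * s := by
    rw [hsq]
    calc c * S ≤ (1 / 2) * (Δ ⬝ᵥ Γ.mulVec Δ) := by nlinarith
      _ ≤ v ⬝ᵥ Δ := hbasic
      _ ≤ ‖v‖ * ∑ i, |Δ i| := hholder
      _ ≤ ‖v‖ * (2 * Real.sqrt k * s) := by
          exact mul_le_mul_of_nonneg_left hcone hM0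
      _ = 2 * Real.sqrt k * ‖v‖ * s := by ring
  have h2 : s ≤ (2 * Real.sqrt k / c) * ‖v‖ := by
    rcases eq_or_lt_of_le hs0 with h | h
    · rw [← h]; positivity
    · have : c * s ≤ 2 * Real.sqrt k * ‖v‖ := by
        have := key
        nlinarith
      rw [div_mul_eq_mul_div, le_div_iff₀ hc]
      nlinarith
  refine ⟨h2, ?_⟩
  have hkk : Real.sqrt k * Real.sqrt k = k := Real.mul_self_sqrt hk.le
  calc ∑ i, |Δ i| ≤ 2 * Real.sqrt k * s := hcone
    _ ≤ 2 * Real.sqrt k * ((2 * Real.sqrt k / c) * ‖v‖) := by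
        exact mul_le_mul_of_nonneg_left h2 (by positivity)
    _ = (4 * k / c) * ‖v‖ := by
        field_simp
        nlinarith
end

section
/- Let Σ ∈ ℝ^{p×p} be symmetric positive definite with smallest eigenvalue λ_min(Σ) > 0, and let Γ̂ ∈ ℝ^{p×p} satisfy ‖Γ̂ - Σ‖_∞ ≤ λ_min(Σ)/(16k) entrywise, where k ≥ 1. Then for all Δ ∈ ℝ^p with ‖Δ‖₁ ≤ 2√k‖Δ‖₂, one has ΔᵀΓ̂Δ ≥ (3/4)·λ_min(Σ)·‖Δ‖₂². -/
open Matrix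

/-- If `Σ` is symmetric positive definite with smallest eigenvalue `lmin > 0`
(so `uᵀΣu ≥ lmin‖u‖₂²` for all `u`) and `Γ̂` is entrywise within
`lmin/(16k)` of `Σ`, then on the cone `‖Δ‖₁ ≤ 2√k‖Δ‖₂` we have
`ΔᵀΓ̂Δ ≥ (3/4) lmin ‖Δ‖₂²`. -/
theorem restricted_curvature_of_entrywise_perturbation
    (p : ℕ) (Sig Γ : Matrix (Fin p) (Fin p) ℝ) (hSsymm : Sig.IsSymm)
    (lmin : ℝ) (hl : 0 < lmin)
    (hmin : ∀ u : Fin p → ℝ, lmin * (∑ i, (u i) ^ 2) ≤ u ⬝ᵥ Sig.mulVec u)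
    (k : ℝ) (hk : 1 ≤ k)
    (hpert : ∀ i j, |Γ i j - Sig i j| ≤ lmin / (16 * k)) :
    ∀ Δ : Fin p → ℝ,
      ∑ i, |Δ i| ≤ 2 * Real.sqrt k * Real.sqrt (∑ i, (Δ i) ^ 2) →
      (3 / 4) * lmin * (∑ i, (Δ i) ^ 2) ≤ Δ ⬝ᵥ Γ.mulVec Δ := by
  intro Δ hΔ
  have hk0 : (0:ℝ) < k := lt_of_lt_of_le one_pos hk
  set S := ∑ i, (Δ i) ^ 2 with hSdef
  have hS0 : 0 ≤ S := Finset.sum_nonneg fun i _ => sq_nonneg _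
  have habs0 : 0 ≤ ∑ i, |Δ i| := Finset.sum_nonneg fun i _ => abs_nonneg _
  -- ℓ1 bound squared
  have h1sq : (∑ i, |Δ i|) ^ 2 ≤ 4 * k * S := by
    have := pow_le_pow_left₀ habs0 hΔ 2
    calc (∑ i, |Δ i|) ^ 2 ≤ (2 * Real.sqrt k * Real.sqrt S) ^ 2 := this
      _ = 4 * k * S := by
          rw [mul_pow, mul_pow, Real.sq_sqrt hk0.le, Real.sq_sqrt hS0]; norm_num
  -- expand quadratic forms
  have expand : ∀ M : Matrix (Fin p) (Fin p) ℝ,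
      Δ ⬝ᵥ M.mulVec Δ = ∑ i, ∑ j, Δ i * (M i j * Δ j) := by
    intro M
    simp [dotProduct, mulVec, Finset.mul_sum]
  have hsplit : Δ ⬝ᵥ Γ.mulVec Δ
      = Δ ⬝ᵥ Sig.mulVec Δ + ∑ i, ∑ j, Δ i * ((Γ i j - Sig i j) * Δ j) := by
    rw [expand, expand, ← Finset.sum_add_distrib]
    refine Finset.sum_congr rfl fun i _ => ?_
    rw [← Finset.sum_add_distrib]
    refine Finset.sum_congr rfl fun j _ => ?_
    ring
  -- error bound
  have herr : |∑ i, ∑ j, Δ i * ((Γ i j - Sig i j) * Δ j)|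
      ≤ lmin / (16 * k) * (∑ i, |Δ i|) ^ 2 := by
    calc |∑ i, ∑ j, Δ i * ((Γ i j - Sig i j) * Δ j)|
        ≤ ∑ i, ∑ j, |Δ i * ((Γ i j - Sig i j) * Δ j)| := by
          refine (Finset.abs_sum_le_sum_abs _ _).trans ?_
          exact Finset.sum_le_sum fun i _ => Finset.abs_sum_le_sum_abs _ _
      _ ≤ ∑ i, ∑ j, |Δ i| * (lmin / (16 * k) * |Δ j|) := by
          refine Finset.sum_le_sum fun i _ => Finset.sum_le_sum fun j _ => ?_
          rw [abs_mul, abs_mul]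
          exact mul_le_mul_of_nonneg_left
            (mul_le_mul_of_nonneg_right (hpert i j) (abs_nonneg _)) (abs_nonneg _)
      _ = lmin / (16 * k) * (∑ i, |Δ i|) ^ 2 := by
          rw [sq]
          rw [Finset.sum_mul_sum]
          rw [Finset.mul_sum]
          refine Finset.sum_congr rfl fun i _ => ?_
          rw [Finset.mul_sum]
          refine Finset.sum_congr rfl fun j _ => ?_
          ring
  have hcoef : lmin / (16 * k) * (4 * k * S) = lmin / 4 * S := by
    field_simp; ring
  have herr' : -(lmin / 4 * S) ≤ ∑ i, ∑ j, Δ i * ((Γ i j - Sig i j) * Δ j) := by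
    have h2 : lmin / (16 * k) * (∑ i, |Δ i|) ^ 2 ≤ lmin / 4 * S := by
      rw [← hcoef]
      exact mul_le_mul_of_nonneg_left h1sq (by positivity)
    have := (abs_le.mp herr).1
    linarith
  have hmainS := hmin Δ
  rw [hsplit]
  linarith
end
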